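/- With the notation of the single-channel regularization (A ∈ ℂ^n nonzero, Γ ∈ ℂ^n, G_i = Γ_i A_i, weighted means ⟨·⟩, V(Γ) = √(⟨J⟩² + Var(J) + Var(S)) > 0, λ = ‖A‖²(⟨J⟩ + V(Γ))), the positive part χ⁺ = λ|+⟩⟨+| of χ = |A⟩⟨G| + |G⟩⟨A| has entries χ⁺_{ij} = (A_i A_j*)/(2V(Γ)) · [Γ_i Γ_j* + ⟨J²⟩ + ⟨S²⟩ + (V(Γ) + i⟨S⟩)Γ_i + (V(Γ) − i⟨S⟩)Γ_j*]. -/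

import Mathlib

open Matrix
open scoped ComplexOrder

/-- The matrix `χ = |A⟩⟨G| + |G⟩⟨A|`. -/
noncomputable def dyadSum {n : ℕ} (A G : Fin n → ℂ) : Matrix (Fin n) (Fin n) ℂ :=
  Matrix.of fun i j => A i * star (G j) + G i * star (A j)

/-- The positive part of a matrix χ, i.e. `(χ + √(χᴴχ))/2`. -/
noncomputable def matPosPart {n : ℕ} (χ : Matrix (Fin n) (Fin n) ℂ) : Matrix (Fin n) (Fin n) ℂ :=
  (2 : ℂ)⁻¹ • (χ + ((Matrix.posSemidef_conjTranspose_mul_self χ).1.eigenvectorUnitary.1 *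
    diagonal ((↑) ∘ (√·) ∘ (Matrix.posSemidef_conjTranspose_mul_self χ).1.eigenvalues) *
    (star (Matrix.posSemidef_conjTranspose_mul_self χ).1.eigenvectorUnitary : Matrix (Fin n) (Fin n) ℂ)))

/-- `‖A‖² = ∑ |A_i|²`. -/
noncomputable def nrmSq {n : ℕ} (A : Fin n → ℂ) : ℝ := ∑ i, Complex.normSq (A i)

/-- Weighted mean `⟨x⟩ = (∑ x_i |A_i|²)/(∑ |A_i|²)`. -/
noncomputable def wmean {n : ℕ} (A : Fin n → ℂ) (x : Fin n → ℝ) : ℝ :=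
  (∑ i, x i * Complex.normSq (A i)) / nrmSq A

/-- `Var(x) = ⟨x²⟩ − ⟨x⟩²`. -/
noncomputable def wvar {n : ℕ} (A : Fin n → ℂ) (x : Fin n → ℝ) : ℝ :=
  wmean A (fun i => x i ^ 2) - (wmean A x) ^ 2

/-- `V(Γ) = √(⟨J⟩² + Var(J) + Var(S))`. -/
noncomputable def vGamma {n : ℕ} (A Γ : Fin n → ℂ) : ℝ :=
  Real.sqrt ((wmean A fun i => (Γ i).re) ^ 2 +
    wvar A (fun i => (Γ i).re) + wvar A (fun i => (Γ i).im))

open scoped MatrixOrder in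
private lemma sqrt_port {n : ℕ} (χ M : Matrix (Fin n) (Fin n) ℂ) (hM : M.PosSemidef)
    (key : M * M = χᴴ * χ) :
    ((Matrix.posSemidef_conjTranspose_mul_self χ).1.eigenvectorUnitary.1 *
    diagonal ((↑) ∘ (√·) ∘ (Matrix.posSemidef_conjTranspose_mul_self χ).1.eigenvalues) *
    (star (Matrix.posSemidef_conjTranspose_mul_self χ).1.eigenvectorUnitary : Matrix (Fin n) (Fin n) ℂ)) = M := by
  have e1 : cfc Real.sqrt (χᴴ * χ) = M := by
    rw [← cfcₙ_eq_cfc, ← CFC.sqrt_eq_real_sqrt _ (Matrix.posSemidef_conjTranspose_mul_self χ).nonneg]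
    exact CFC.sqrt_unique key hM.nonneg
  rw [(Matrix.posSemidef_conjTranspose_mul_self χ).1.cfc_eq, IsHermitian.cfc,
    Unitary.conjStarAlgAut_apply] at e1
  exact e1

private lemma sum_fact {n : ℕ} (u x : Fin n → ℂ) (c : ℂ) :
    ∑ k, c * (u k * x k) = c * (u ⬝ᵥ x) := by
  rw [dotProduct, Finset.mul_sum]

/-- Entrywise formula for the regularized Kossakowski matrix `χ⁺` in the
single-noise-channel case. -/
theorem stmt_12 {n : ℕ} (A Γ G : Fin n → ℂ) (hA : A ≠ 0)
    (hG : ∀ i, G i = Γ i * A i) (hAG : LinearIndependent ℂ ![A, G])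
    (hV : 0 < vGamma A Γ) :
    ∀ i j, matPosPart (dyadSum A G) i j =
      (A i * star (A j)) / (2 * (vGamma A Γ : ℂ)) *
        (Γ i * star (Γ j) + ((wmean A fun i => (Γ i).re ^ 2 : ℝ) : ℂ) +
          ((wmean A fun i => (Γ i).im ^ 2 : ℝ) : ℂ) +
          ((vGamma A Γ : ℂ) + Complex.I * ((wmean A fun i => (Γ i).im : ℝ) : ℂ)) * Γ i +
          ((vGamma A Γ : ℂ) - Complex.I * ((wmean A fun i => (Γ i).im : ℝ) : ℂ)) * star (Γ j)) := by
  classical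
  set V : ℝ := vGamma A Γ with hVdef
  set na : ℝ := nrmSq A with hnadef
  set jm : ℝ := wmean A (fun i => (Γ i).re) with hjdef
  set sm : ℝ := wmean A (fun i => (Γ i).im) with hsdef
  set qJ : ℝ := wmean A (fun i => (Γ i).re ^ 2) with hqJdef
  set qS : ℝ := wmean A (fun i => (Γ i).im ^ 2) with hqSdef
  -- basic real facts
  have hna : 0 < na := by
    obtain ⟨i, hi⟩ := Function.ne_iff.mp hA
    exact Finset.sum_pos' (fun k _ => Complex.normSq_nonneg _)
      ⟨i, Finset.mem_univ i, Complex.normSq_pos.mpr hi⟩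
  have hj : ∑ i, (Γ i).re * Complex.normSq (A i) = jm * na := by
    rw [hjdef, wmean, ← hnadef]; field_simp
  have hs : ∑ i, (Γ i).im * Complex.normSq (A i) = sm * na := by
    rw [hsdef, wmean, ← hnadef]; field_simp
  have hqJ : ∑ i, (Γ i).re ^ 2 * Complex.normSq (A i) = qJ * na := by
    rw [hqJdef, wmean, ← hnadef]; field_simp
  have hqS : ∑ i, (Γ i).im ^ 2 * Complex.normSq (A i) = qS * na := by
    rw [hqSdef, wmean, ← hnadef]; field_simp
  have hV2 : V ^ 2 = qJ + qS - sm ^ 2 := by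
    have harg : 0 < (wmean A fun i => (Γ i).re) ^ 2 +
        wvar A (fun i => (Γ i).re) + wvar A (fun i => (Γ i).im) :=
      Real.sqrt_pos.mp hV
    have := Real.sq_sqrt harg.le
    rw [hVdef, vGamma, this, wvar, wvar, ← hjdef, ← hsdef, ← hqJdef, ← hqSdef]
    ring
  have hVne : (V : ℂ) ≠ 0 := by exact_mod_cast (Complex.ofReal_ne_zero.mpr hV.ne')
  -- the vector w and candidate square root M
  set z : ℂ := Complex.I * (sm : ℂ) with hzdef
  have hz : z * z = -((sm : ℂ) ^ 2) := by
    rw [hzdef]; linear_combination ((sm : ℂ) ^ 2) * Complex.I_sq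
  set w : Fin n → ℂ := fun k => G k - z * A k with hwdef
  have hstarz : star z = -z := by
    rw [hzdef]; simp
  have hstarw : ∀ k, star (w k) = star (G k) + z * star (A k) := by
    intro k; rw [hwdef]; simp [hstarz]
  -- dot products
  have hdAA : star A ⬝ᵥ A = (na : ℂ) := by
    rw [hnadef, nrmSq, dotProduct]; push_cast
    exact Finset.sum_congr rfl fun k _ => by
      simpa [mul_comm] using (Complex.mul_conj (A k))
  have hdAG : star A ⬝ᵥ G = ((jm * na : ℝ) : ℂ) + Complex.I * ((sm * na : ℝ) : ℂ) := by
    have step : ∀ k, star (A k) * G k =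
        (((Γ k).re * Complex.normSq (A k) : ℝ) : ℂ) +
          Complex.I * (((Γ k).im * Complex.normSq (A k) : ℝ) : ℂ) := by
      intro k
      rw [hG k]
      push_cast
      simp only [Complex.star_def]
      linear_combination (Γ k) * Complex.mul_conj (A k) -
        ((Complex.normSq (A k) : ℂ)) * (Complex.re_add_im (Γ k))
    calc star A ⬝ᵥ G = ∑ k, ((((Γ k).re * Complex.normSq (A k) : ℝ) : ℂ) +
          Complex.I * (((Γ k).im * Complex.normSq (A k) : ℝ) : ℂ)) :=
        Finset.sum_congr rfl fun k _ => step k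
      _ = (∑ k, (((Γ k).re * Complex.normSq (A k) : ℝ) : ℂ)) +
          Complex.I * ∑ k, (((Γ k).im * Complex.normSq (A k) : ℝ) : ℂ) := by
        rw [Finset.sum_add_distrib, ← Finset.mul_sum]
      _ = ((jm * na : ℝ) : ℂ) + Complex.I * ((sm * na : ℝ) : ℂ) := by
        rw [← Complex.ofReal_sum, ← Complex.ofReal_sum, hj, hs]
  have hdGA : star G ⬝ᵥ A = ((jm * na : ℝ) : ℂ) - Complex.I * ((sm * na : ℝ) : ℂ) := by
    have h1 : star G ⬝ᵥ A = star (star A ⬝ᵥ G) := by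
      rw [star_dotProduct]
    rw [h1, hdAG]
    simp only [star_add, Complex.star_def, _root_.map_mul, Complex.conj_ofReal, Complex.conj_I]
    ring
  have hdGG : star G ⬝ᵥ G = (((qJ + qS) * na : ℝ) : ℂ) := by
    have step : ∀ k, star (G k) * G k =
        ((((Γ k).re ^ 2 + (Γ k).im ^ 2) * Complex.normSq (A k) : ℝ) : ℂ) := by
      intro k
      have h1 : star (G k) * G k = (Complex.normSq (G k) : ℂ) := by
        rw [mul_comm]; exact Complex.mul_conj (G k)
      rw [h1, hG k, Complex.normSq_mul, Complex.normSq_apply (Γ k)]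
      push_cast; ring
    calc star G ⬝ᵥ G = ∑ k, ((((Γ k).re ^ 2 + (Γ k).im ^ 2) * Complex.normSq (A k) : ℝ) : ℂ) :=
        Finset.sum_congr rfl fun k _ => step k
      _ = (((qJ + qS) * na : ℝ) : ℂ) := by
        rw [← Complex.ofReal_sum]
        congr 1
        have : ∀ k, ((Γ k).re ^ 2 + (Γ k).im ^ 2) * Complex.normSq (A k) =
            (Γ k).re ^ 2 * Complex.normSq (A k) + (Γ k).im ^ 2 * Complex.normSq (A k) := by
          intro k; ring
        rw [Finset.sum_congr rfl fun k _ => this k, Finset.sum_add_distrib, hqJ, hqS]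
        ring
  -- complex cast of the variance identity
  have hV2c : ((V : ℂ)) ^ 2 = ((qJ : ℝ) : ℂ) + ((qS : ℝ) : ℂ) - ((sm : ℝ) : ℂ) ^ 2 := by
    exact_mod_cast congrArg (Complex.ofReal) hV2
  -- dot products involving w
  have hdww : star w ⬝ᵥ w = ((V ^ 2 * na : ℝ) : ℂ) := by
    have step : ∀ k, star (w k) * w k = star (G k) * G k + z * (star (A k) * G k)
        - z * (star (G k) * A k) - z * z * (star (A k) * A k) := by
      intro k; rw [hstarw k]; simp only [hwdef]; ring
    calc star w ⬝ᵥ w = ∑ k, (star (G k) * G k + z * (star (A k) * G k)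
          - z * (star (G k) * A k) - z * z * (star (A k) * A k)) :=
        Finset.sum_congr rfl fun k _ => step k
      _ = (star G ⬝ᵥ G) + z * (star A ⬝ᵥ G) - z * (star G ⬝ᵥ A) - z * z * (star A ⬝ᵥ A) := by
        simp only [dotProduct, Pi.star_apply, Finset.sum_add_distrib, Finset.sum_sub_distrib, ← Finset.mul_sum]
      _ = ((V ^ 2 * na : ℝ) : ℂ) := by
        rw [hdGG, hdAG, hdGA, hdAA, hzdef]
        push_cast
        rw [hV2c]
        linear_combination ((sm : ℂ) ^ 2 * (na : ℂ)) * Complex.I_sq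
  have hdwA : star w ⬝ᵥ A = ((jm * na : ℝ) : ℂ) := by
    have step : ∀ k, star (w k) * A k = star (G k) * A k + z * (star (A k) * A k) := by
      intro k; rw [hstarw k]; ring
    calc star w ⬝ᵥ A = ∑ k, (star (G k) * A k + z * (star (A k) * A k)) :=
        Finset.sum_congr rfl fun k _ => step k
      _ = (star G ⬝ᵥ A) + z * (star A ⬝ᵥ A) := by
        simp only [dotProduct, Pi.star_apply, Finset.sum_add_distrib, ← Finset.mul_sum]
      _ = ((jm * na : ℝ) : ℂ) := by rw [hdGA, hdAA, hzdef]; push_cast; ring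
  have hdAw : star A ⬝ᵥ w = ((jm * na : ℝ) : ℂ) := by
    have step : ∀ k, star (A k) * w k = star (A k) * G k - z * (star (A k) * A k) := by
      intro k; simp only [hwdef]; ring
    calc star A ⬝ᵥ w = ∑ k, (star (A k) * G k - z * (star (A k) * A k)) :=
        Finset.sum_congr rfl fun k _ => step k
      _ = (star A ⬝ᵥ G) - z * (star A ⬝ᵥ A) := by
        simp only [dotProduct, Pi.star_apply, Finset.sum_sub_distrib, ← Finset.mul_sum]
      _ = ((jm * na : ℝ) : ℂ) := by rw [hdAG, hdAA, hzdef]; push_cast; ring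
  -- the candidate square root
  set M : Matrix (Fin n) (Fin n) ℂ :=
    Matrix.of (fun i k => (V : ℂ)⁻¹ * (w i * star (w k)) + (V : ℂ) * (A i * star (A k)))
    with hMdef
  have hMapp : ∀ i k, M i k =
      (V : ℂ)⁻¹ * (w i * star (w k)) + (V : ℂ) * (A i * star (A k)) := fun i k => rfl
  -- entries of M * M
  have hMM : ∀ i j, (M * M) i j =
      (V : ℂ)⁻¹ * (V : ℂ)⁻¹ * (w i * star (w j)) * (star w ⬝ᵥ w)
      + (V : ℂ)⁻¹ * (V : ℂ) * (w i * star (A j)) * (star w ⬝ᵥ A)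
      + (V : ℂ) * (V : ℂ)⁻¹ * (A i * star (w j)) * (star A ⬝ᵥ w)
      + (V : ℂ) * (V : ℂ) * (A i * star (A j)) * (star A ⬝ᵥ A) := by
    intro i j
    rw [Matrix.mul_apply]
    calc ∑ k, M i k * M k j
        = ∑ k, ((V : ℂ)⁻¹ * (V : ℂ)⁻¹ * (w i * star (w j)) * (star (w k) * w k)
          + (V : ℂ)⁻¹ * (V : ℂ) * (w i * star (A j)) * (star (w k) * A k)
          + (V : ℂ) * (V : ℂ)⁻¹ * (A i * star (w j)) * (star (A k) * w k)
          + (V : ℂ) * (V : ℂ) * (A i * star (A j)) * (star (A k) * A k)) :=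
        Finset.sum_congr rfl fun k _ => by rw [hMapp i k, hMapp k j]; ring
      _ = _ := by
        simp only [dotProduct, Pi.star_apply, Finset.sum_add_distrib, ← Finset.mul_sum]
  -- entries of χ * χ
  have hXX : ∀ i j, (dyadSum A G * dyadSum A G) i j =
      (A i * star (G j)) * (star G ⬝ᵥ A)
      + (A i * star (A j)) * (star G ⬝ᵥ G)
      + (G i * star (G j)) * (star A ⬝ᵥ A)
      + (G i * star (A j)) * (star A ⬝ᵥ G) := by
    intro i j
    rw [Matrix.mul_apply]
    calc ∑ k, dyadSum A G i k * dyadSum A G k j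
        = ∑ k, ((A i * star (G j)) * (star (G k) * A k)
          + (A i * star (A j)) * (star (G k) * G k)
          + (G i * star (G j)) * (star (A k) * A k)
          + (G i * star (A j)) * (star (A k) * G k)) :=
        Finset.sum_congr rfl fun k _ => by simp only [dyadSum, Matrix.of_apply]; ring
      _ = _ := by
        simp only [dotProduct, Pi.star_apply, Finset.sum_add_distrib, ← Finset.mul_sum]
  -- χ is hermitian
  have hherm : (dyadSum A G)ᴴ = dyadSum A G := by
    ext i j
    simp only [conjTranspose_apply, dyadSum, Matrix.of_apply, star_add, star_mul', star_star]
    ring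
  -- the key identity M² = χᴴχ
  have key : M * M = (dyadSum A G)ᴴ * dyadSum A G := by
    rw [hherm]
    ext i j
    rw [hMM i j, hXX i j, hdww, hdwA, hdAw, hdAA, hdGA, hdGG, hdAG]
    simp only [hwdef, hstarw j]
    field_simp
    rw [hzdef]
    simp only [star_sub, star_mul', Complex.star_def, Complex.conj_I, Complex.conj_ofReal]
    push_cast
    linear_combination (-(A i * (starRingEnd ℂ) (A j)) * (V : ℂ) ^ 2 * (na : ℂ) * (sm : ℂ) ^ 2) *
        Complex.I_sq +
      ((A i * (starRingEnd ℂ) (A j)) * (na : ℂ) * (V : ℂ) ^ 2) * hV2c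
  -- M is positive semidefinite
  have hMpsd : M.PosSemidef := by
    refine PosSemidef.of_dotProduct_mulVec_nonneg ?_ ?_
    · ext i j
      simp only [conjTranspose_apply, hMapp, star_add, star_mul', star_star, star_inv₀]
      rw [Complex.star_def, Complex.conj_ofReal]
      ring
    · intro x
      have h1 : ∀ i, (M *ᵥ x) i =
          (V : ℂ)⁻¹ * w i * (star w ⬝ᵥ x) + (V : ℂ) * A i * (star A ⬝ᵥ x) := by
        intro i
        show ∑ k, M i k * x k = _
        calc ∑ k, M i k * x k
            = ∑ k, ((V : ℂ)⁻¹ * w i * (star (w k) * x k)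
              + (V : ℂ) * A i * (star (A k) * x k)) :=
            Finset.sum_congr rfl fun k _ => by rw [hMapp i k]; ring
          _ = _ := by
            simp only [dotProduct, Pi.star_apply, Finset.sum_add_distrib, ← Finset.mul_sum]
      have h2 : star x ⬝ᵥ (M *ᵥ x) =
          (V : ℂ)⁻¹ * ((star x ⬝ᵥ w) * (star w ⬝ᵥ x))
          + (V : ℂ) * ((star x ⬝ᵥ A) * (star A ⬝ᵥ x)) := by
        calc star x ⬝ᵥ (M *ᵥ x)
            = ∑ i, ((V : ℂ)⁻¹ * ((star w ⬝ᵥ x)) * (star (x i) * w i)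
              + (V : ℂ) * ((star A ⬝ᵥ x)) * (star (x i) * A i)) :=
            Finset.sum_congr rfl fun i _ => by rw [Pi.star_apply, h1 i]; ring
          _ = (V : ℂ)⁻¹ * ((star w ⬝ᵥ x)) * (star x ⬝ᵥ w)
              + (V : ℂ) * ((star A ⬝ᵥ x)) * (star x ⬝ᵥ A) := by
            simp only [dotProduct, Pi.star_apply, Finset.sum_add_distrib, ← Finset.mul_sum]
          _ = _ := by ring
      rw [h2]
      have hw' : star w ⬝ᵥ x = star (star x ⬝ᵥ w) := by rw [star_dotProduct]
      have hA' : star A ⬝ᵥ x = star (star x ⬝ᵥ A) := by rw [star_dotProduct]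
      rw [hw', hA']
      have hVinv : (0 : ℂ) ≤ (V : ℂ)⁻¹ := by
        rw [← Complex.ofReal_inv]
        exact Complex.zero_le_real.mpr (inv_nonneg.mpr hV.le)
      have hVpos : (0 : ℂ) ≤ (V : ℂ) := Complex.zero_le_real.mpr hV.le
      exact add_nonneg (mul_nonneg hVinv (mul_star_self_nonneg _))
        (mul_nonneg hVpos (mul_star_self_nonneg _))
  -- identify the square root
  have hsqrt : ((Matrix.posSemidef_conjTranspose_mul_self (dyadSum A G)).1.eigenvectorUnitary.1 *
    diagonal ((↑) ∘ (√·) ∘ (Matrix.posSemidef_conjTranspose_mul_self (dyadSum A G)).1.eigenvalues) *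
    (star (Matrix.posSemidef_conjTranspose_mul_self (dyadSum A G)).1.eigenvectorUnitary :
      Matrix (Fin n) (Fin n) ℂ)) = M :=
    sqrt_port _ M hMpsd key
  -- final entrywise computation
  intro i j
  rw [matPosPart, Matrix.smul_apply, Matrix.add_apply, hsqrt, hMapp i j]
  simp only [dyadSum, Matrix.of_apply, hstarw j, hwdef, hG i, hG j, star_mul']
  field_simp
  rw [hzdef]
  simp only [star_sub, star_mul', Complex.star_def, _root_.map_mul, Complex.conj_I, Complex.conj_ofReal]
  linear_combination (-(A i * (starRingEnd ℂ) (A j)) * (sm : ℂ) ^ 2) * Complex.I_sq +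
    (A i * (starRingEnd ℂ) (A j)) * hV2c +
    (A i * (starRingEnd ℂ) (A j)) * ((starRingEnd ℂ) (Γ j) * Γ i
      - (starRingEnd ℂ) (Γ j) * Complex.I * (sm : ℂ) + Γ i * Complex.I * (sm : ℂ)
      - Complex.I ^ 2 * (sm : ℂ) ^ 2 + (V : ℂ) * (starRingEnd ℂ) (Γ j) + (V : ℂ) * Γ i
      + (V : ℂ) ^ 2) * mul_inv_cancel₀ hVne
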